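/- Let T > 0 and let u : [0,T] × ℝ → ℝ be a bounded C² function with bounded first and second derivatives, such that u(t,·) and ∂ₓu(t,·) are square-integrable for each t, and u satisfies the nonlocal Fornberg–Whitham equation ∂ₜu + (3/2)u∂ₓu = H ∗ u(t,·) pointwise. Let a, b : [0,T] → ℝ be C¹ characteristics, i.e., a′(t) = (3/2)u(t, a(t)) and b′(t) = (3/2)u(t, b(t)), with a(t) ≤ b(t). Then t ↦ ∫_{a(t)}^{b(t)} (∂ₓu(t,x))² dx is differentiable on [0,T] and (d/dt) ∫_{a(t)}^{b(t)} (∂ₓu(t,x))² dx = −(3/2) ∫_{a(t)}^{b(t)} (∂ₓu(t,x))³ dx + 2 ∫_{a(t)}^{b(t)} ∂ₓu(t,x) · ((G ∗ u(t,·))(x) − u(t,x)) dx. -/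

import Mathlib

open Real Set MeasureTheory

/-- The kernel `G(x) = (1/2) e^{-|x|}` of `(1 - ∂ₓ²)⁻¹`. -/
noncomputable def G (x : ℝ) : ℝ := (1 / 2) * Real.exp (-|x|)

/-- `H(x) = -(1/2) sign(x) e^{-|x|}`, the a.e. derivative of `G`. -/
noncomputable def H (x : ℝ) : ℝ := -(1 / 2) * Real.sign x * Real.exp (-|x|)

lemma measurable_rsign : Measurable Real.sign := by
  unfold Real.sign
  exact Measurable.ite measurableSet_Iio measurable_const
    (Measurable.ite measurableSet_Ioi measurable_const measurable_const)

lemma measurable_H : Measurable H := by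
  unfold H
  exact ((measurable_const.mul measurable_rsign).mul
    ((measurable_neg.comp measurable_norm).exp))

lemma abs_H_le (x : ℝ) : |H x| ≤ (1/2) * Real.exp (-|x|) := by
  unfold H
  rw [abs_mul, abs_mul]
  have h1 : |Real.sign x| ≤ 1 := by
    rcases lt_trichotomy x 0 with h | h | h
    · rw [Real.sign_of_neg h]; norm_num
    · simp [h, Real.sign_zero]
    · rw [Real.sign_of_pos h]; norm_num
  have h2 : |Real.exp (-|x|)| = Real.exp (-|x|) := abs_of_pos (Real.exp_pos _)
  rw [h2]
  calc |(-(1/2) : ℝ)| * |Real.sign x| * Real.exp (-|x|)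
      ≤ (1/2) * 1 * Real.exp (-|x|) := by
        apply mul_le_mul_of_nonneg_right _ (Real.exp_pos _).le
        apply mul_le_mul _ h1 (abs_nonneg _) (by norm_num)
        rw [abs_neg, abs_of_pos]; norm_num
    _ = (1/2) * Real.exp (-|x|) := by ring

/-- `J g x = ∫_{-∞}^x e^y g(y) dy`. -/
noncomputable def Jint (g : ℝ → ℝ) (x : ℝ) : ℝ := ∫ y in Iic x, Real.exp y * g y

section Kernel

variable {f : ℝ → ℝ} {M : ℝ}

lemma integrableOn_exp_mul_Iic' (hf : Continuous f) (hM : ∀ y, |f y| ≤ M) (x : ℝ) :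
    IntegrableOn (fun y => Real.exp y * f y) (Iic x) := by
  apply Integrable.mono' ((integrableOn_exp_Iic x).const_mul M)
  · exact ((Real.continuous_exp.mul hf)).aestronglyMeasurable.restrict
  · filter_upwards with y
    rw [norm_mul, Real.norm_eq_abs, Real.norm_eq_abs, abs_of_pos (Real.exp_pos _)]
    calc Real.exp y * |f y| ≤ Real.exp y * M := by
          exact mul_le_mul_of_nonneg_left (hM y) (Real.exp_pos _).le
      _ = M * Real.exp y := by ring

lemma hasDerivAt_Jint (hf : Continuous f) (hM : ∀ y, |f y| ≤ M) (x : ℝ) :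
    HasDerivAt (Jint f) (Real.exp x * f x) x := by
  have key : ∀ z : ℝ, Jint f z = Jint f 0 + ∫ y in (0:ℝ)..z, Real.exp y * f y := by
    intro z
    have := intervalIntegral.integral_Iic_sub_Iic (integrableOn_exp_mul_Iic' hf hM 0)
      (integrableOn_exp_mul_Iic' hf hM z)
    unfold Jint
    linarith [this]
  have h1 : HasDerivAt (fun z => Jint f 0 + ∫ y in (0:ℝ)..z, Real.exp y * f y)
      (Real.exp x * f x) x := by
    apply HasDerivAt.const_add
    apply intervalIntegral.integral_hasDerivAt_right
    · exact (Real.continuous_exp.mul hf).intervalIntegrable _ _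
    · exact (Real.continuous_exp.mul hf).aestronglyMeasurable.stronglyMeasurableAtFilter
    · exact (Real.continuous_exp.mul hf).continuousAt
  exact h1.congr_of_eventuallyEq (Filter.Eventually.of_forall key)

lemma continuous_Jint (hf : Continuous f) (hM : ∀ y, |f y| ≤ M) : Continuous (Jint f) := by
  have : Differentiable ℝ (Jint f) := fun x => (hasDerivAt_Jint hf hM x).differentiableAt
  exact this.continuous
  
end Kernel

section Conv

variable {f : ℝ → ℝ} {M : ℝ}

lemma integrable_expabs (x : ℝ) : Integrable (fun y => Real.exp (-|x - y|)) := by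
  have h1 : IntegrableOn (fun y => Real.exp (-|x - y|)) (Iic x) := by
    have : IntegrableOn (fun y => Real.exp (-x) * Real.exp y) (Iic x) :=
      (integrableOn_exp_Iic x).const_mul _
    apply this.congr_fun _ measurableSet_Iic
    intro y hy
    simp only [mem_Iic] at hy
    show Real.exp (-x) * Real.exp y = Real.exp (-|x - y|)
    rw [← Real.exp_add]
    congr 1
    rw [abs_of_nonneg (by linarith)]
    ring
  have h2 : IntegrableOn (fun y => Real.exp (-|x - y|)) (Ioi x) := by
    have : IntegrableOn (fun y => Real.exp x * Real.exp (-1 * y)) (Ioi x) :=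
      (exp_neg_integrableOn_Ioi x one_pos).const_mul _
    apply this.congr_fun _ measurableSet_Ioi
    intro y hy
    simp only [mem_Ioi] at hy
    show Real.exp x * Real.exp (-1 * y) = Real.exp (-|x - y|)
    rw [← Real.exp_add]
    congr 1
    rw [abs_of_nonpos (by linarith)]
    ring
  rw [← integrableOn_univ, ← Iic_union_Ioi (a := x)]
  exact h1.union h2

lemma integrable_H_mul (hf : Continuous f) (hM : ∀ y, |f y| ≤ M) (x : ℝ) :
    Integrable (fun y => H (x - y) * f y) := by
  apply Integrable.mono' ((integrable_expabs x).const_mul (M/2))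
  · exact ((measurable_H.comp (measurable_const.sub measurable_id)).mul
      hf.measurable).aestronglyMeasurable
  · filter_upwards with y
    rw [norm_mul, Real.norm_eq_abs, Real.norm_eq_abs]
    calc |H (x - y)| * |f y| ≤ ((1/2) * Real.exp (-|x - y|)) * M := by
          apply mul_le_mul (abs_H_le _) (hM y) (abs_nonneg _)
          positivity
      _ = M / 2 * Real.exp (-|x - y|) := by ring

lemma abs_G_le (x : ℝ) : |G x| ≤ (1/2) * Real.exp (-|x|) := by
  unfold G
  rw [abs_mul, abs_of_pos (Real.exp_pos _), abs_of_pos (by norm_num : (0:ℝ) < 1/2)]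

lemma integrable_G_mul (hf : Continuous f) (hM : ∀ y, |f y| ≤ M) (x : ℝ) :
    Integrable (fun y => G (x - y) * f y) := by
  apply Integrable.mono' ((integrable_expabs x).const_mul (M/2))
  · have : Continuous G := by
      unfold G
      exact continuous_const.mul ((continuous_abs.neg).rexp)
    exact ((this.comp (continuous_const.sub continuous_id)).mul hf).aestronglyMeasurable
  · filter_upwards with y
    rw [norm_mul, Real.norm_eq_abs, Real.norm_eq_abs]
    calc |G (x - y)| * |f y| ≤ ((1/2) * Real.exp (-|x - y|)) * M := by
          apply mul_le_mul (abs_G_le _) (hM y) (abs_nonneg _)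
          positivity
      _ = M / 2 * Real.exp (-|x - y|) := by ring

lemma repH (hf : Continuous f) (hM : ∀ y, |f y| ≤ M) (x : ℝ) :
    ∫ y, H (x - y) * f y =
      -(1/2) * Real.exp (-x) * Jint f x
        + (1/2) * Real.exp x * Jint (fun z => f (-z)) (-x) := by
  have hI := integrable_H_mul hf hM x
  rw [← intervalIntegral.integral_Iic_add_Ioi (b := x) hI.integrableOn hI.integrableOn]
  have p1 : ∫ y in Iic x, H (x - y) * f y = -(1/2) * Real.exp (-x) * Jint f x := by
    rw [integral_Iic_eq_integral_Iio]
    have : ∀ y ∈ Iio x, H (x - y) * f y = (-(1/2) * Real.exp (-x)) * (Real.exp y * f y) := by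
      intro y hy
      simp only [mem_Iio] at hy
      unfold H
      rw [Real.sign_of_pos (by linarith : (0:ℝ) < x - y), abs_of_pos (by linarith : (0:ℝ) < x - y)]
      have : -(x - y) = -x + y := by ring
      rw [this, Real.exp_add]
      ring
    rw [setIntegral_congr_fun measurableSet_Iio this, MeasureTheory.integral_const_mul]
    unfold Jint
    rw [integral_Iic_eq_integral_Iio]
  have p2 : ∫ y in Ioi x, H (x - y) * f y
      = (1/2) * Real.exp x * Jint (fun z => f (-z)) (-x) := by
    have : ∀ y ∈ Ioi x, H (x - y) * f y
        = ((1/2) * Real.exp x) * (Real.exp (-y) * f y) := by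
      intro y hy
      simp only [mem_Ioi] at hy
      unfold H
      rw [Real.sign_of_neg (by linarith : x - y < 0), abs_of_neg (by linarith : x - y < 0)]
      have : -(-(x - y)) = x + -y := by ring
      rw [this, Real.exp_add]
      ring
    rw [setIntegral_congr_fun measurableSet_Ioi this, MeasureTheory.integral_const_mul]
    have hcv : ∫ y in Ioi x, Real.exp (-y) * f y
        = ∫ z in Iic (-x), Real.exp z * f (-z) := by
      have := integral_comp_neg_Ioi (c := x) (f := fun z => Real.exp z * f (-z))
      simpa using this
    rw [hcv]
    rfl
  rw [p1, p2]

lemma repG (hf : Continuous f) (hM : ∀ y, |f y| ≤ M) (x : ℝ) :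
    ∫ y, G (x - y) * f y =
      (1/2) * Real.exp (-x) * Jint f x
        + (1/2) * Real.exp x * Jint (fun z => f (-z)) (-x) := by
  have hI := integrable_G_mul hf hM x
  rw [← intervalIntegral.integral_Iic_add_Ioi (b := x) hI.integrableOn hI.integrableOn]
  have p1 : ∫ y in Iic x, G (x - y) * f y = (1/2) * Real.exp (-x) * Jint f x := by
    have : ∀ y ∈ Iic x, G (x - y) * f y = ((1/2) * Real.exp (-x)) * (Real.exp y * f y) := by
      intro y hy
      simp only [mem_Iic] at hy
      unfold G
      rw [abs_of_nonneg (by linarith : (0:ℝ) ≤ x - y)]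
      have : -(x - y) = -x + y := by ring
      rw [this, Real.exp_add]
      ring
    rw [setIntegral_congr_fun measurableSet_Iic this, MeasureTheory.integral_const_mul]
    rfl
  have p2 : ∫ y in Ioi x, G (x - y) * f y
      = (1/2) * Real.exp x * Jint (fun z => f (-z)) (-x) := by
    have : ∀ y ∈ Ioi x, G (x - y) * f y
        = ((1/2) * Real.exp x) * (Real.exp (-y) * f y) := by
      intro y hy
      simp only [mem_Ioi] at hy
      unfold G
      rw [abs_of_neg (by linarith : x - y < 0)]
      have : -(-(x - y)) = x + -y := by ring
      rw [this, Real.exp_add]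
      ring
    rw [setIntegral_congr_fun measurableSet_Ioi this, MeasureTheory.integral_const_mul]
    have hcv : ∫ y in Ioi x, Real.exp (-y) * f y
        = ∫ z in Iic (-x), Real.exp z * f (-z) := by
      have := integral_comp_neg_Ioi (c := x) (f := fun z => Real.exp z * f (-z))
      simpa using this
    rw [hcv]
    rfl
  rw [p1, p2]

lemma hasDerivAt_convH (hf : Continuous f) (hM : ∀ y, |f y| ≤ M) (x : ℝ) :
    HasDerivAt (fun x => ∫ y, H (x - y) * f y)
      ((∫ y, G (x - y) * f y) - f x) x := by
  have hfn : Continuous (fun z => f (-z)) := hf.comp continuous_neg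
  have hMn : ∀ y, |(fun z => f (-z)) y| ≤ M := fun y => hM (-y)
  have hA : HasDerivAt (fun x => -(1/2) * Real.exp (-x) * Jint f x)
      ((1/2) * Real.exp (-x) * Jint f x + -(1/2) * Real.exp (-x) * (Real.exp x * f x)) x := by
    have h1 : HasDerivAt (fun x : ℝ => -(1/2) * Real.exp (-x))
        ((1/2) * Real.exp (-x)) x := by
      have := ((Real.hasDerivAt_exp (-x)).comp x (hasDerivAt_neg x)).const_mul (-(1/2) : ℝ)
      convert this using 1
      · rfl
      · rfl
      · rfl
      ring
    exact h1.mul (hasDerivAt_Jint hf hM x)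
  have hB : HasDerivAt (fun x => (1/2) * Real.exp x * Jint (fun z => f (-z)) (-x))
      ((1/2) * Real.exp x * Jint (fun z => f (-z)) (-x)
        + (1/2) * Real.exp x * -(Real.exp (-x) * f x)) x := by
    have h1 : HasDerivAt (fun x : ℝ => (1/2) * Real.exp x) ((1/2) * Real.exp x) x :=
      (Real.hasDerivAt_exp x).const_mul _
    have h2 : HasDerivAt (fun x : ℝ => Jint (fun z => f (-z)) (-x))
        (-(Real.exp (-x) * f x)) x := by
      have := (hasDerivAt_Jint hfn hMn (-x)).comp x (hasDerivAt_neg x)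
      convert this using 1
      · rfl
      · rfl
      · rfl
      simp only [neg_neg]
      ring
    exact h1.mul h2
  have key := hA.add hB
  have heq : (fun x => ∫ y, H (x - y) * f y)
      = fun x => -(1/2) * Real.exp (-x) * Jint f x
          + (1/2) * Real.exp x * Jint (fun z => f (-z)) (-x) := by
    funext z
    exact repH hf hM z
  rw [heq]
  convert key using 1
  · rfl
  · rfl
  · rfl
  rw [repG hf hM x]
  have h2 : Real.exp (-x) * Real.exp x = 1 := by
    rw [← Real.exp_add]; simp
  linear_combination (f x) * h2

lemma continuous_convG (hf : Continuous f) (hM : ∀ y, |f y| ≤ M) :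
    Continuous (fun x => ∫ y, G (x - y) * f y) := by
  have hfn : Continuous (fun z => f (-z)) := hf.comp continuous_neg
  have hMn : ∀ y, |(fun z => f (-z)) y| ≤ M := fun y => hM (-y)
  have heq : (fun x => ∫ y, G (x - y) * f y)
      = fun x => (1/2) * Real.exp (-x) * Jint f x
          + (1/2) * Real.exp x * Jint (fun z => f (-z)) (-x) := by
    funext z
    exact repG hf hM z
  rw [heq]
  apply Continuous.add
  · exact (continuous_const.mul (Real.continuous_exp.comp continuous_neg)).mul
      (continuous_Jint hf hM)
  · exact (continuous_const.mul Real.continuous_exp).mul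
      ((continuous_Jint hfn hMn).comp continuous_neg)

end Conv

section Partial

variable {F : ℝ × ℝ → ℝ}

lemma hasDerivAt_right2 (hF : ContDiff ℝ 2 F) (t x : ℝ) :
    HasDerivAt (fun y => F (t, y)) (fderiv ℝ F (t, x) (0, 1)) x := by
  have h1 : HasFDerivAt F (fderiv ℝ F (t, x)) (t, x) :=
    (hF.differentiable two_ne_zero (t, x)).hasFDerivAt
  have h2 : HasDerivAt (fun y : ℝ => ((t, y) : ℝ × ℝ)) ((0, 1) : ℝ × ℝ) x :=
    (hasDerivAt_const x t).prodMk (hasDerivAt_id x)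
  exact h1.comp_hasDerivAt x h2

lemma hasDerivAt_left2 (hF : ContDiff ℝ 2 F) (t x : ℝ) :
    HasDerivAt (fun s => F (s, x)) (fderiv ℝ F (t, x) (1, 0)) t := by
  have h1 : HasFDerivAt F (fderiv ℝ F (t, x)) (t, x) :=
    (hF.differentiable two_ne_zero (t, x)).hasFDerivAt
  have h2 : HasDerivAt (fun s : ℝ => ((s, x) : ℝ × ℝ)) ((1, 0) : ℝ × ℝ) t :=
    (hasDerivAt_id t).prodMk (hasDerivAt_const t x)
  exact h1.comp_hasDerivAt t h2

lemma hasDerivAt_fderiv_left (hF : ContDiff ℝ 2 F) (t x : ℝ) (v : ℝ × ℝ) :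
    HasDerivAt (fun s => fderiv ℝ F (s, x) v)
      (fderiv ℝ (fderiv ℝ F) (t, x) (1, 0) v) t := by
  have hF' : ContDiff ℝ 1 (fderiv ℝ F) := hF.fderiv_right (by norm_num)
  have h1 : HasFDerivAt (fderiv ℝ F) (fderiv ℝ (fderiv ℝ F) (t, x)) (t, x) :=
    (hF'.differentiable one_ne_zero (t, x)).hasFDerivAt
  have h2 : HasDerivAt (fun s : ℝ => ((s, x) : ℝ × ℝ)) ((1, 0) : ℝ × ℝ) t :=
    (hasDerivAt_id t).prodMk (hasDerivAt_const t x)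
  have h3 : HasDerivAt (fun s => fderiv ℝ F (s, x))
      (fderiv ℝ (fderiv ℝ F) (t, x) (1, 0)) t := h1.comp_hasDerivAt t h2
  have h4 := h3.clm_apply (hasDerivAt_const t v)
  simpa using h4

lemma hasDerivAt_fderiv_right (hF : ContDiff ℝ 2 F) (t x : ℝ) (v : ℝ × ℝ) :
    HasDerivAt (fun y => fderiv ℝ F (t, y) v)
      (fderiv ℝ (fderiv ℝ F) (t, x) (0, 1) v) x := by
  have hF' : ContDiff ℝ 1 (fderiv ℝ F) := hF.fderiv_right (by norm_num)
  have h1 : HasFDerivAt (fderiv ℝ F) (fderiv ℝ (fderiv ℝ F) (t, x)) (t, x) :=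
    (hF'.differentiable one_ne_zero (t, x)).hasFDerivAt
  have h2 : HasDerivAt (fun y : ℝ => ((t, y) : ℝ × ℝ)) ((0, 1) : ℝ × ℝ) x :=
    (hasDerivAt_const x t).prodMk (hasDerivAt_id x)
  have h3 : HasDerivAt (fun y => fderiv ℝ F (t, y))
      (fderiv ℝ (fderiv ℝ F) (t, x) (0, 1)) x := h1.comp_hasDerivAt x h2
  have h4 := h3.clm_apply (hasDerivAt_const x v)
  simpa using h4

end Partial

lemma hasDerivWithinAt_of_sq_bound {R : ℝ → ℝ} {s : Set ℝ} {t C : ℝ}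
    (hR : ∀ z ∈ s, |R z| ≤ C * (z - t) ^ 2) (ht : R t = 0) :
    HasDerivWithinAt R 0 s t := by
  rw [hasDerivWithinAt_iff_isLittleO]
  have h1 : (fun z : ℝ => (z - t) ^ 2) =o[nhdsWithin t s] (fun z => z - t) := by
    have he : (fun z : ℝ => (z - t) ^ 2) = fun z => (z - t) * (z - t) := by
      funext z; ring
    rw [he]
    have h2 : (fun z : ℝ => z - t) =o[nhdsWithin t s] (fun _ => (1 : ℝ)) := by
      rw [Asymptotics.isLittleO_one_iff]
      have : Filter.Tendsto (fun z : ℝ => z - t) (nhds t) (nhds 0) := by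
        have h0 : Continuous (fun z : ℝ => z - t) := continuous_id.sub continuous_const
        have := h0.tendsto t
        simpa using this
      exact this.mono_left nhdsWithin_le_nhds
    have h3 := h2.mul_isBigO (Asymptotics.isBigO_refl (fun z : ℝ => z - t) (nhdsWithin t s))
    simpa using h3
  have h2 : (fun z => R z) =O[nhdsWithin t s] (fun z : ℝ => (z - t) ^ 2) := by
    rw [Asymptotics.isBigO_iff]
    refine ⟨|C|, ?_⟩
    filter_upwards [self_mem_nhdsWithin] with z hz
    rw [Real.norm_eq_abs, Real.norm_eq_abs, abs_pow, sq_abs]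
    exact le_trans (hR z hz) (mul_le_mul_of_nonneg_right (le_abs_self C) (sq_nonneg _))
  have := h2.trans_isLittleO h1
  apply this.congr' _ (by rfl)
  filter_upwards with z
  simp [ht]

lemma abs_sub_le_of_hasDerivAt {g g' : ℝ → ℝ} {C : ℝ}
    (h : ∀ z, HasDerivAt g (g' z) z) (hC : ∀ z, |g' z| ≤ C) (p q : ℝ) :
    |g p - g q| ≤ C * |p - q| := by
  have := Convex.norm_image_sub_le_of_norm_hasDerivWithin_le
    (f := g) (f' := g') (s := univ) (fun z _ => (h z).hasDerivWithinAt)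
    (fun z _ => by simpa [Real.norm_eq_abs] using hC z) convex_univ (mem_univ q) (mem_univ p)
  simpa [Real.norm_eq_abs] using this

/-- Differentiation of the localized energy `∫_{a(t)}^{b(t)} (∂ₓu)² dx` between two
characteristics `a, b` of a bounded `C²` solution `u` (with bounded first and second
derivatives, and square-integrable `u(t,·)`, `∂ₓu(t,·)`) of the nonlocal Fornberg–Whitham
equation `∂ₜu + (3/2) u ∂ₓu = H ∗ u(t,·)`. -/
theorem energy_derivative (T : ℝ) (hT : 0 < T) (u : ℝ → ℝ → ℝ) (a b : ℝ → ℝ)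
    (hu_smooth : ContDiff ℝ 2 (Function.uncurry u))
    (hu_bdd : ∃ M : ℝ, ∀ t x : ℝ, |u t x| ≤ M)
    (hd1_bdd : ∃ M : ℝ, ∀ p : ℝ × ℝ, ‖fderiv ℝ (Function.uncurry u) p‖ ≤ M)
    (hd2_bdd : ∃ M : ℝ, ∀ p : ℝ × ℝ, ‖fderiv ℝ (fderiv ℝ (Function.uncurry u)) p‖ ≤ M)
    (huL2 : ∀ t : ℝ, MemLp (u t) 2 (volume : Measure ℝ))
    (huxL2 : ∀ t : ℝ, MemLp (deriv (u t)) 2 (volume : Measure ℝ))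
    (hFW : ∀ t ∈ Icc (0 : ℝ) T, ∀ x : ℝ,
      deriv (fun s : ℝ => u s x) t + (3 / 2) * u t x * deriv (u t) x =
        ∫ y : ℝ, H (x - y) * u t y)
    (ha : ∀ t ∈ Icc (0 : ℝ) T, HasDerivWithinAt a ((3 / 2) * u t (a t)) (Icc 0 T) t)
    (hb : ∀ t ∈ Icc (0 : ℝ) T, HasDerivWithinAt b ((3 / 2) * u t (b t)) (Icc 0 T) t)
    (hab : ∀ t ∈ Icc (0 : ℝ) T, a t ≤ b t) :
    ∀ t ∈ Icc (0 : ℝ) T,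
      HasDerivWithinAt (fun s : ℝ => ∫ x in a s..b s, (deriv (u s) x) ^ 2)
        (-(3 / 2) * (∫ x in a t..b t, (deriv (u t) x) ^ 3) +
          2 * ∫ x in a t..b t, deriv (u t) x * ((∫ y : ℝ, G (x - y) * u t y) - u t x))
        (Icc 0 T) t := by
  intro t ht
  obtain ⟨M₀, hM₀⟩ := hu_bdd
  obtain ⟨M₁, hM₁⟩ := hd1_bdd
  obtain ⟨M₂, hM₂⟩ := hd2_bdd
  set U := Function.uncurry u with hUdef
  have hU2 : ContDiff ℝ 2 U := hu_smooth
  have hM₀0 : 0 ≤ M₀ := le_trans (abs_nonneg _) (hM₀ 0 0)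
  have hM₁0 : 0 ≤ M₁ := le_trans (norm_nonneg _) (hM₁ (0, 0))
  have hM₂0 : 0 ≤ M₂ := le_trans (norm_nonneg (fderiv ℝ (fderiv ℝ U) (0, 0))) (hM₂ (0, 0))
  -- partial derivatives
  set ux : ℝ → ℝ → ℝ := fun s x => fderiv ℝ U (s, x) (0, 1) with hux_def
  set utx : ℝ → ℝ → ℝ := fun s x => fderiv ℝ (fderiv ℝ U) (s, x) (1, 0) (0, 1) with hutx_def
  set uxx : ℝ → ℝ → ℝ := fun s x => fderiv ℝ (fderiv ℝ U) (s, x) (0, 1) (0, 1) with huxx_def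
  have hux_deriv : ∀ s x : ℝ, HasDerivAt (u s) (ux s x) x := fun s x =>
    hasDerivAt_right2 hU2 s x
  have hderiv_ux : ∀ s x : ℝ, deriv (u s) x = ux s x := fun s x => (hux_deriv s x).deriv
  have hut_deriv : ∀ s x : ℝ, HasDerivAt (fun s' => u s' x) (fderiv ℝ U (s, x) (1, 0)) s :=
    fun s x => hasDerivAt_left2 hU2 s x
  have hutx_deriv : ∀ s x : ℝ, HasDerivAt (fun s' => ux s' x) (utx s x) s := fun s x =>
    hasDerivAt_fderiv_left hU2 s x (0, 1)
  have huxx_deriv : ∀ s x : ℝ, HasDerivAt (fun y => ux s y) (uxx s x) x := fun s x =>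
    hasDerivAt_fderiv_right hU2 s x (0, 1)
  have huxt_deriv : ∀ s x : ℝ, HasDerivAt (fun y => fderiv ℝ U (s, y) (1, 0))
      (fderiv ℝ (fderiv ℝ U) (s, x) (0, 1) (1, 0)) x := fun s x =>
    hasDerivAt_fderiv_right hU2 s x (1, 0)
  have hnorm10 : ‖((1 : ℝ), (0 : ℝ))‖ = 1 := by
    simp [Prod.norm_def]
  have hnorm01 : ‖((0 : ℝ), (1 : ℝ))‖ = 1 := by
    simp [Prod.norm_def]
  have hux_bdd : ∀ s x : ℝ, |ux s x| ≤ M₁ := by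
    intro s x
    have h := (fderiv ℝ U (s, x)).le_opNorm ((0 : ℝ), (1 : ℝ))
    rw [hnorm01, mul_one] at h
    exact le_trans h (hM₁ _)
  have hutx_bdd : ∀ s x : ℝ, |utx s x| ≤ M₂ := by
    intro s x
    have h := (fderiv ℝ (fderiv ℝ U) (s, x) ((1 : ℝ), (0 : ℝ))).le_opNorm ((0 : ℝ), (1 : ℝ))
    rw [hnorm01, mul_one] at h
    refine le_trans h (le_trans ((fderiv ℝ (fderiv ℝ U) (s, x)).le_opNorm _ ) ?_)
    rw [hnorm10, mul_one]
    exact hM₂ _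
  -- continuity facts
  have hUc : Continuous U := hU2.continuous
  have hcont_u : ∀ s : ℝ, Continuous (u s) := fun s =>
    hUc.comp (continuous_const.prodMk continuous_id)
  have hF'c : Continuous (fderiv ℝ U) := hU2.continuous_fderiv two_ne_zero
  have hF''c : Continuous (fderiv ℝ (fderiv ℝ U)) :=
    (hU2.fderiv_right (m := 1) (le_refl 2)).continuous_fderiv one_ne_zero
  have hcont_ux : ∀ s : ℝ, Continuous (fun x => ux s x) := by
    intro s
    exact ((hF'c.comp (continuous_const.prodMk continuous_id)).clm_apply continuous_const)
  have hcont_utx : ∀ s : ℝ, Continuous (fun x => utx s x) := by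
    intro s
    exact (((hF''c.comp (continuous_const.prodMk continuous_id)).clm_apply
      continuous_const).clm_apply continuous_const)
  have hcont_uxx : ∀ s : ℝ, Continuous (fun x => uxx s x) := by
    intro s
    exact (((hF''c.comp (continuous_const.prodMk continuous_id)).clm_apply
      continuous_const).clm_apply continuous_const)
  -- symmetry of second derivative
  have hsymm : ∀ s x : ℝ,
      fderiv ℝ (fderiv ℝ U) (s, x) (0, 1) (1, 0) = utx s x := by
    intro s x
    have hd : ∀ q : ℝ × ℝ, HasFDerivAt U (fderiv ℝ U q) q := fun q =>
      (hU2.differentiable two_ne_zero q).hasFDerivAt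
    have hd2 : HasFDerivAt (fderiv ℝ U) (fderiv ℝ (fderiv ℝ U) (s, x)) (s, x) :=
      ((hU2.fderiv_right (by norm_num : (1:WithTop ℕ∞) + 1 ≤ 2)).differentiable one_ne_zero
        (s, x)).hasFDerivAt
    exact second_derivative_symmetric hd hd2 _ _
  -- the PDE at time t
  have hPDE : ∀ x : ℝ, fderiv ℝ U (t, x) (1, 0) =
      (∫ y : ℝ, H (x - y) * u t y) - (3 / 2) * u t x * ux t x := by
    intro x
    have h := hFW t ht x
    rw [hderiv_ux] at h
    have h2 : deriv (fun s => u s x) t = fderiv ℝ U (t, x) (1, 0) :=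
      (hut_deriv t x).deriv
    rw [h2] at h
    linarith
  -- the key identity for the mixed derivative
  have hstar : ∀ x : ℝ, utx t x =
      ((∫ y : ℝ, G (x - y) * u t y) - u t x) - (3 / 2) * (ux t x) ^ 2
        - (3 / 2) * u t x * uxx t x := by
    intro x
    have hL : HasDerivAt (fun y => fderiv ℝ U (t, y) (1, 0)) (utx t x) x := by
      have := huxt_deriv t x
      rwa [hsymm t x] at this
    have hconv : HasDerivAt (fun y => ∫ z : ℝ, H (y - z) * u t z)
        ((∫ z : ℝ, G (x - z) * u t z) - u t x) x :=
      hasDerivAt_convH (hcont_u t) (hM₀ t) x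
    have hprod : HasDerivAt (fun y => (3 / 2) * u t y * ux t y)
        ((3 / 2) * ux t x * ux t x + (3 / 2) * u t x * uxx t x) x := by
      have h1 : HasDerivAt (fun y => (3 / 2 : ℝ) * u t y) ((3 / 2) * ux t x) x :=
        (hux_deriv t x).const_mul _
      exact h1.mul (huxx_deriv t x)
    have hR := hconv.sub hprod
    have hfe : (fun y => fderiv ℝ U (t, y) (1, 0))
        = fun y => (∫ z : ℝ, H (y - z) * u t z) - (3 / 2) * u t y * ux t y := by
      funext y
      exact hPDE y
    rw [hfe] at hL
    have := hL.unique hR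
    rw [this]
    ring
  -- convenient continuity of the G-convolution
  have hGc : Continuous (fun x => ∫ y : ℝ, G (x - y) * u t y) :=
    continuous_convG (hcont_u t) (hM₀ t)
  -- interval integrability of (ux s ·)^2
  have hIIs : ∀ s p q : ℝ, IntervalIntegrable (fun x => (ux s x) ^ 2) volume p q :=
    fun s p q => (((hcont_ux s).pow 2).intervalIntegrable p q)
  -- splitting of the moving integral
  have hsplit : ∀ s : ℝ, (∫ x in a s..b s, (ux s x) ^ 2)
      = (∫ x in a t..b t, (ux s x) ^ 2) + (∫ x in b t..b s, (ux s x) ^ 2)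
        - (∫ x in a t..a s, (ux s x) ^ 2) := by
    intro s
    have h1 := intervalIntegral.integral_add_adjacent_intervals
      (hIIs s (a s) (a t)) (hIIs s (a t) (b t))
    have h2 := intervalIntegral.integral_add_adjacent_intervals
      (hIIs s (a s) (b t)) (hIIs s (b t) (b s))
    have h3 : (∫ x in a s..a t, (ux s x) ^ 2) = -∫ x in a t..a s, (ux s x) ^ 2 :=
      intervalIntegral.integral_symm _ _
    rw [← h2, ← h1, h3]
    ring
  -- time-Lipschitz estimate for ux
  have hux_lip : ∀ s x : ℝ, |ux s x - ux t x| ≤ M₂ * |s - t| :=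
    fun s x => abs_sub_le_of_hasDerivAt (g := fun s' => ux s' x)
      (g' := fun s' => utx s' x) (fun z => hutx_deriv z x) (fun z => hutx_bdd z x) s t
  have hsq_lip : ∀ s x : ℝ, |(ux s x) ^ 2 - (ux t x) ^ 2| ≤ 2 * M₁ * M₂ * |s - t| := by
    intro s x
    have h1 : (ux s x) ^ 2 - (ux t x) ^ 2 = (ux s x + ux t x) * (ux s x - ux t x) := by ring
    rw [h1, abs_mul]
    have h2 : |ux s x + ux t x| ≤ 2 * M₁ := by
      have := abs_add_le (ux s x) (ux t x)
      have ha1 := hux_bdd s x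
      have ha2 := hux_bdd t x
      linarith
    calc |ux s x + ux t x| * |ux s x - ux t x| ≤ (2 * M₁) * (M₂ * |s - t|) := by
          exact mul_le_mul h2 (hux_lip s x) (abs_nonneg _) (by positivity)
      _ = 2 * M₁ * M₂ * |s - t| := by ring
  -- boundary terms
  have hbnd : ∀ c : ℝ → ℝ,
      (∀ s ∈ Icc (0 : ℝ) T, HasDerivWithinAt c ((3 / 2) * u s (c s)) (Icc 0 T) s) →
      HasDerivWithinAt (fun s => ∫ x in c t..c s, (ux s x) ^ 2)
        ((ux t (c t)) ^ 2 * ((3 / 2) * u t (c t))) (Icc 0 T) t := by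
    intro c hc
    have hclip : ∀ s ∈ Icc (0 : ℝ) T, |c s - c t| ≤ (3 / 2) * (M₀ + 1) * |s - t| := by
      intro s hs
      have := Convex.norm_image_sub_le_of_norm_hasDerivWithin_le
        (f := c) (f' := fun z => (3 / 2) * u z (c z)) (s := Icc (0 : ℝ) T)
        (C := (3 / 2) * (M₀ + 1))
        (fun z hz => hc z hz) (fun z _ => by
          rw [Real.norm_eq_abs, abs_mul]
          have h1 : |(3 / 2 : ℝ)| = 3 / 2 := by norm_num
          rw [h1]
          have := hM₀ z (c z)
          linarith) (convex_Icc 0 T) ht hs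
      simpa [Real.norm_eq_abs] using this
    have hG2 : HasDerivAt (fun y => ∫ x in c t..y, (ux t x) ^ 2) ((ux t (c t)) ^ 2) (c t) :=
      intervalIntegral.integral_hasDerivAt_right (hIIs t _ _)
        ((hcont_ux t).pow 2).aestronglyMeasurable.stronglyMeasurableAtFilter
        ((hcont_ux t).pow 2).continuousAt
    have hcomp : HasDerivWithinAt (fun s => ∫ x in c t..c s, (ux t x) ^ 2)
        ((ux t (c t)) ^ 2 * ((3 / 2) * u t (c t))) (Icc 0 T) t :=
      hG2.comp_hasDerivWithinAt t (hc t ht)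
    have hRb : ∀ s ∈ Icc (0 : ℝ) T,
        |(∫ x in c t..c s, (ux s x) ^ 2) - (∫ x in c t..c s, (ux t x) ^ 2)|
          ≤ (2 * M₁ * M₂ * ((3 / 2) * (M₀ + 1))) * (s - t) ^ 2 := by
      intro s hs
      have hsub : (∫ x in c t..c s, (ux s x) ^ 2) - (∫ x in c t..c s, (ux t x) ^ 2)
          = ∫ x in c t..c s, ((ux s x) ^ 2 - (ux t x) ^ 2) :=
        (intervalIntegral.integral_sub (hIIs s _ _) (hIIs t _ _)).symm
      rw [hsub]
      have hnorm := intervalIntegral.norm_integral_le_of_norm_le_const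
        (C := 2 * M₁ * M₂ * |s - t|) (f := fun x => (ux s x) ^ 2 - (ux t x) ^ 2)
        (a := c t) (b := c s) (fun x _ => by
          rw [Real.norm_eq_abs]; exact hsq_lip s x)
      rw [Real.norm_eq_abs] at hnorm
      calc |∫ x in c t..c s, ((ux s x) ^ 2 - (ux t x) ^ 2)|
          ≤ 2 * M₁ * M₂ * |s - t| * |c s - c t| := hnorm
        _ ≤ 2 * M₁ * M₂ * |s - t| * ((3 / 2) * (M₀ + 1) * |s - t|) := by
            apply mul_le_mul_of_nonneg_left (hclip s hs) (by positivity)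
        _ = (2 * M₁ * M₂ * ((3 / 2) * (M₀ + 1))) * (|s - t| * |s - t|) := by ring
        _ = (2 * M₁ * M₂ * ((3 / 2) * (M₀ + 1))) * (s - t) ^ 2 := by
            rw [← sq, sq_abs]
    have hR : HasDerivWithinAt (fun s =>
        (∫ x in c t..c s, (ux s x) ^ 2) - (∫ x in c t..c s, (ux t x) ^ 2)) 0 (Icc 0 T) t := by
      apply hasDerivWithinAt_of_sq_bound hRb
      simp
    have hsum := hcomp.add hR
    have hfe : (fun s => (∫ x in c t..c s, (ux t x) ^ 2)
        + ((∫ x in c t..c s, (ux s x) ^ 2) - (∫ x in c t..c s, (ux t x) ^ 2)))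
        = fun s => ∫ x in c t..c s, (ux s x) ^ 2 := by
      funext s; ring
    simp only [Pi.add_def] at hsum
    rw [hfe] at hsum
    simpa using hsum
  -- derivative of the fixed-endpoint integral (differentiation under the integral)
  have hcont_utx_s : ∀ s : ℝ, Continuous (fun x => utx s x) := hcont_utx
  have hF1 : HasDerivAt (fun s => ∫ x in a t..b t, (ux s x) ^ 2)
      (∫ x in a t..b t, 2 * ux t x * utx t x) t := by
    have key := intervalIntegral.hasDerivAt_integral_of_dominated_loc_of_deriv_le
      (F := fun s x => (ux s x) ^ 2) (F' := fun s x => 2 * ux s x * utx s x)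
      (bound := fun _ => 2 * M₁ * M₂) (a := a t) (b := b t) (μ := volume)
      (x₀ := t) (s := Metric.ball t 1) (Metric.ball_mem_nhds t one_pos)
      (Filter.Eventually.of_forall fun s =>
        (((hcont_ux s).pow 2)).aestronglyMeasurable.restrict)
      (hIIs t _ _)
      ((continuous_const.mul (hcont_ux t)).mul (hcont_utx t)).aestronglyMeasurable.restrict
      (Filter.Eventually.of_forall fun x _ => fun s _ => by
        rw [Real.norm_eq_abs, abs_mul, abs_mul]
        have h1 : |(2 : ℝ)| = 2 := by norm_num
        rw [h1]
        calc 2 * |ux s x| * |utx s x| ≤ 2 * M₁ * M₂ := by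
              have := hux_bdd s x
              have := hutx_bdd s x
              have := abs_nonneg (ux s x)
              have := abs_nonneg (utx s x)
              nlinarith
          _ = 2 * M₁ * M₂ := rfl)
      (intervalIntegrable_const)
      (Filter.Eventually.of_forall fun x _ => fun s _ => by
        have h := (hutx_deriv s x).fun_pow 2
        simpa using h)
    exact key.2
  -- FTC for the antiderivative W
  have hWderiv : ∀ x : ℝ, HasDerivAt (fun y => (1 / 2) * u t y * (ux t y * ux t y))
      ((1 / 2) * (ux t x) ^ 3 + u t x * ux t x * uxx t x) x := by
    intro x
    have h1 : HasDerivAt (fun y => (1 / 2 : ℝ) * u t y) ((1 / 2) * ux t x) x :=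
      (hux_deriv t x).const_mul _
    have h2 : HasDerivAt (fun y => ux t y * ux t y)
        (uxx t x * ux t x + ux t x * uxx t x) x :=
      (huxx_deriv t x).mul (huxx_deriv t x)
    have h3 := h1.mul h2
    convert h3 using 1
    · rfl
    · rfl
    · rfl
    ring
  have hWd_cont : Continuous (fun x => (1 / 2) * (ux t x) ^ 3 + u t x * ux t x * uxx t x) := by
    apply Continuous.add
    · exact continuous_const.mul ((hcont_ux t).pow 3)
    · exact ((hcont_u t).mul (hcont_ux t)).mul (hcont_uxx t)
  have hFTCW : (∫ x in a t..b t, ((1 / 2) * (ux t x) ^ 3 + u t x * ux t x * uxx t x))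
      = (1 / 2) * u t (b t) * (ux t (b t) * ux t (b t))
        - (1 / 2) * u t (a t) * (ux t (a t) * ux t (a t)) :=
    intervalIntegral.integral_eq_sub_of_hasDerivAt (fun x _ => hWderiv x)
      (hWd_cont.intervalIntegrable _ _)
  -- rewrite the integrand of hF1 using the PDE
  have hptw : ∀ x : ℝ, 2 * ux t x * utx t x
      = 2 * (ux t x * ((∫ y : ℝ, G (x - y) * u t y) - u t x))
        - (3 / 2) * (ux t x) ^ 3
        - 3 * ((1 / 2) * (ux t x) ^ 3 + u t x * ux t x * uxx t x) := by
    intro x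
    rw [hstar x]
    ring
  have hIG_int : IntervalIntegrable
      (fun x => ux t x * ((∫ y : ℝ, G (x - y) * u t y) - u t x)) volume (a t) (b t) :=
    ((hcont_ux t).mul (hGc.sub (hcont_u t))).intervalIntegrable _ _
  have hI3_int : IntervalIntegrable (fun x => (ux t x) ^ 3) volume (a t) (b t) :=
    ((hcont_ux t).pow 3).intervalIntegrable _ _
  have hD1 : (∫ x in a t..b t, 2 * ux t x * utx t x)
      = 2 * (∫ x in a t..b t, ux t x * ((∫ y : ℝ, G (x - y) * u t y) - u t x))
        - (3 / 2) * (∫ x in a t..b t, (ux t x) ^ 3)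
        - 3 * ((1 / 2) * u t (b t) * (ux t (b t) * ux t (b t))
            - (1 / 2) * u t (a t) * (ux t (a t) * ux t (a t))) := by
    rw [intervalIntegral.integral_congr (g := fun x =>
      2 * (ux t x * ((∫ y : ℝ, G (x - y) * u t y) - u t x))
        - (3 / 2) * (ux t x) ^ 3
        - 3 * ((1 / 2) * (ux t x) ^ 3 + u t x * ux t x * uxx t x))
      (fun x _ => hptw x)]
    rw [intervalIntegral.integral_sub (((hIG_int.const_mul 2).sub
        (hI3_int.const_mul ((3:ℝ)/2)))) ((hWd_cont.intervalIntegrable _ _).const_mul 3)]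
    rw [intervalIntegral.integral_sub (hIG_int.const_mul 2) (hI3_int.const_mul ((3:ℝ)/2))]
    rw [intervalIntegral.integral_const_mul, intervalIntegral.integral_const_mul,
      intervalIntegral.integral_const_mul, hFTCW]
  -- assemble everything
  simp only [hderiv_ux]
  have hE := (hF1.hasDerivWithinAt.add (hbnd b hb)).sub (hbnd a ha)
  have hfe : (fun s => ((∫ x in a t..b t, (ux s x) ^ 2) + (∫ x in b t..b s, (ux s x) ^ 2))
      - (∫ x in a t..a s, (ux s x) ^ 2)) = fun s => ∫ x in a s..b s, (ux s x) ^ 2 := by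
    funext s
    rw [hsplit s]
  simp only [Pi.add_def, Pi.sub_def] at hE
  rw [hfe] at hE
  convert hE using 1
  · rfl
  · rfl
  rw [hD1]
  ring
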